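/- Let A > 0, B ≥ 0 and C be real constants with B² − 4AC < 0. For every y₀ > 0 there exists a map f from Ω = ℝ × (y₀, ∞) into Euclidean ℝ³ which is differentiable on Ω with locally Lipschitz derivative (class C^{1,1}) and satisfies, for every (x,y) ∈ Ω: ⟨∂ₓf, ∂ₓf⟩ = A y² + B y + C, ⟨∂ₓf, ∂_yf⟩ = 0, ⟨∂_yf, ∂_yf⟩ = 1. That is, the helicoid-type metric g = (Ay² + By + C) dx² + dy² admits a C^{1,1} isometric immersion of Ω into ℝ³. -/

import Mathlib

/-- A map `f : Ω ⊆ ℝ² → ℝ³` is a `C^{1,1}` isometric immersion of the metric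
`E dx² + 2F dxdy + G dy²` on `Ω` if it is differentiable on `Ω`, its derivative is
locally Lipschitz on `Ω`, and the induced first fundamental form equals the metric. -/
def IsC11IsometricImmersion (Ω : Set (ℝ × ℝ)) (E F G : ℝ × ℝ → ℝ)
    (f : ℝ × ℝ → EuclideanSpace ℝ (Fin 3)) : Prop :=
  (∀ p ∈ Ω, DifferentiableAt ℝ f p) ∧
  (∀ p ∈ Ω, ∃ ε > (0 : ℝ), ∃ K : NNReal,
      LipschitzOnWith K (fderiv ℝ f) (Metric.ball p ε ∩ Ω)) ∧
  (∀ p ∈ Ω,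
      (inner ℝ (fderiv ℝ f p (1, 0)) (fderiv ℝ f p (1, 0)) : ℝ) = E p ∧
      (inner ℝ (fderiv ℝ f p (1, 0)) (fderiv ℝ f p (0, 1)) : ℝ) = F p ∧
      (inner ℝ (fderiv ℝ f p (0, 1)) (fderiv ℝ f p (0, 1)) : ℝ) = G p)

/-- The helicoid-type metric `g = (Ay² + By + C) dx² + dy²`, with `A > 0`, `B ≥ 0` and
`B² − 4AC < 0`, admits a `C^{1,1}` isometric immersion of any half-plane
`Ω = ℝ × (y₀, ∞)`, `y₀ > 0`, into `ℝ³`. -/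
theorem helicoid_type_C11_isometric_immersion
    (A B C : ℝ) (hA : 0 < A) (hB : 0 ≤ B) (hdisc : B ^ 2 - 4 * A * C < 0)
    (y₀ : ℝ) (hy₀ : 0 < y₀) :
    ∃ f : ℝ × ℝ → EuclideanSpace ℝ (Fin 3),
      IsC11IsometricImmersion {p : ℝ × ℝ | y₀ < p.2}
        (fun p => A * p.2 ^ 2 + B * p.2 + C) (fun _ => 0) (fun _ => 1) f := by
  have hA' : A ≠ 0 := ne_of_gt hA
  set l : ℝ := Real.sqrt A with hl
  set c : ℝ := B / (2 * A) with hc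
  set b : ℝ := Real.sqrt (4 * A * C - B ^ 2) / (2 * A) with hbdef
  have hl2 : l ^ 2 = A := Real.sq_sqrt hA.le
  have hD : (0:ℝ) ≤ 4 * A * C - B ^ 2 := by linarith
  have hb2 : b ^ 2 = (4 * A * C - B ^ 2) / (4 * A ^ 2) := by
    rw [hbdef, div_pow, Real.sq_sqrt hD]; congr 1; ring
  have key : ∀ y : ℝ, A * ((y + c) ^ 2 + b ^ 2) = A * y ^ 2 + B * y + C := by
    intro y
    rw [hb2, hc]
    field_simp
    ring
  let e := EuclideanSpace.equiv (Fin 3) ℝ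
  let g : ℝ × ℝ → Fin 3 → ℝ := fun p =>
    ![(p.2 + c) * Real.cos (l * p.1), (p.2 + c) * Real.sin (l * p.1), b * l * p.1]
  let d : ℝ × ℝ → Fin 3 → (ℝ × ℝ) →L[ℝ] ℝ := fun p =>
    ![(p.2 + c) • ((-Real.sin (l * p.1)) • (l • ContinuousLinearMap.fst ℝ ℝ ℝ)) +
        Real.cos (l * p.1) • ContinuousLinearMap.snd ℝ ℝ ℝ,
      (p.2 + c) • (Real.cos (l * p.1) • (l • ContinuousLinearMap.fst ℝ ℝ ℝ)) +
        Real.sin (l * p.1) • ContinuousLinearMap.snd ℝ ℝ ℝ,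
      (b * l) • ContinuousLinearMap.fst ℝ ℝ ℝ]
  let f : ℝ × ℝ → EuclideanSpace ℝ (Fin 3) := fun p => e.symm (g p)
  have hlin : ∀ p : ℝ × ℝ, HasFDerivAt (fun q : ℝ × ℝ => l * q.1)
      (l • ContinuousLinearMap.fst ℝ ℝ ℝ) p := fun p => hasFDerivAt_fst.const_mul l
  have hg0 : ∀ p : ℝ × ℝ, HasFDerivAt (fun q : ℝ × ℝ => (q.2 + c) * Real.cos (l * q.1))
      (d p 0) p := by
    intro p
    have h1 : HasFDerivAt (fun q : ℝ × ℝ => q.2 + c) (ContinuousLinearMap.snd ℝ ℝ ℝ) p :=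
      hasFDerivAt_snd.add_const c
    have h2 : HasFDerivAt (fun q : ℝ × ℝ => Real.cos (l * q.1))
        ((-Real.sin (l * p.1)) • (l • ContinuousLinearMap.fst ℝ ℝ ℝ)) p :=
      HasDerivAt.comp_hasFDerivAt (h₂ := Real.cos) p (Real.hasDerivAt_cos (l * p.1)) (hlin p)
    simpa [d, Pi.mul_def] using h1.mul h2
  have hg1 : ∀ p : ℝ × ℝ, HasFDerivAt (fun q : ℝ × ℝ => (q.2 + c) * Real.sin (l * q.1))
      (d p 1) p := by
    intro p
    have h1 : HasFDerivAt (fun q : ℝ × ℝ => q.2 + c) (ContinuousLinearMap.snd ℝ ℝ ℝ) p :=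
      hasFDerivAt_snd.add_const c
    have h2 : HasFDerivAt (fun q : ℝ × ℝ => Real.sin (l * q.1))
        ((Real.cos (l * p.1)) • (l • ContinuousLinearMap.fst ℝ ℝ ℝ)) p :=
      HasDerivAt.comp_hasFDerivAt (h₂ := Real.sin) p (Real.hasDerivAt_sin (l * p.1)) (hlin p)
    simpa [d, Pi.mul_def] using h1.mul h2
  have hg2 : ∀ p : ℝ × ℝ, HasFDerivAt (fun q : ℝ × ℝ => b * l * q.1) (d p 2) p := by
    intro p
    simpa [d] using hasFDerivAt_fst.const_mul (b * l) (x := p)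
  have hg : ∀ p : ℝ × ℝ, HasFDerivAt g (ContinuousLinearMap.pi (d p)) p := by
    intro p
    refine hasFDerivAt_pi'.2 fun i => ?_
    fin_cases i <;>
      simp only [g, Matrix.cons_val_zero, Matrix.cons_val_one, Matrix.head_cons,
        Matrix.cons_val_two, Matrix.tail_cons, ContinuousLinearMap.proj_pi, Fin.isValue]
    · exact hg0 p
    · exact hg1 p
    · exact hg2 p
  have hf : ∀ p : ℝ × ℝ, HasFDerivAt f
      ((e.symm : (Fin 3 → ℝ) →L[ℝ] EuclideanSpace ℝ (Fin 3)).comp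
        (ContinuousLinearMap.pi (d p))) p := by
    intro p
    exact ((e.symm : (Fin 3 → ℝ) →L[ℝ] EuclideanSpace ℝ (Fin 3)).hasFDerivAt).comp p (hg p)
  have hfd : ∀ p : ℝ × ℝ, fderiv ℝ f p =
      (e.symm : (Fin 3 → ℝ) →L[ℝ] EuclideanSpace ℝ (Fin 3)).comp
        (ContinuousLinearMap.pi (d p)) := fun p => (hf p).fderiv
  have hsmooth : ContDiff ℝ ⊤ f := by
    apply (e.symm.contDiff).comp
    rw [contDiff_pi]
    have hs0 : ContDiff ℝ ⊤ fun x : ℝ × ℝ => (x.2 + c) * Real.cos (l * x.1) :=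
      (contDiff_snd.add contDiff_const).mul
        (Real.contDiff_cos.comp (contDiff_const.mul contDiff_fst))
    have hs1 : ContDiff ℝ ⊤ fun x : ℝ × ℝ => (x.2 + c) * Real.sin (l * x.1) :=
      (contDiff_snd.add contDiff_const).mul
        (Real.contDiff_sin.comp (contDiff_const.mul contDiff_fst))
    have hs2 : ContDiff ℝ ⊤ fun x : ℝ × ℝ => b * l * x.1 := contDiff_const.mul contDiff_fst
    intro i
    fin_cases i
    · exact hs0
    · exact hs1
    · exact hs2
  refine ⟨f, fun p _ => (hf p).differentiableAt, ?_, ?_⟩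
  · intro p _
    have h1 : ContDiff ℝ 1 (fderiv ℝ f) := (hsmooth.fderiv_right le_top).of_le le_top
    obtain ⟨K, t, ht, hlip⟩ := h1.contDiffAt.exists_lipschitzOnWith
    obtain ⟨ε, hε, hball⟩ := Metric.mem_nhds_iff.1 ht
    exact ⟨ε, hε, K, hlip.mono fun q hq => hball hq.1⟩
  · intro p _
    rw [hfd p]
    have hs := Real.sin_sq_add_cos_sq (l * p.1)
    refine ⟨?_, ?_, ?_⟩ <;>
      simp [e, d, PiLp.inner_apply, Fin.sum_univ_three, ContinuousLinearMap.pi_apply,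
        Matrix.cons_val_zero, Matrix.cons_val_one, Matrix.head_cons, Matrix.cons_val_two,
        Matrix.tail_cons, ContinuousLinearMap.add_apply, ContinuousLinearMap.smul_apply,
        ContinuousLinearMap.coe_fst', ContinuousLinearMap.coe_snd', smul_eq_mul, -inner_self_eq_norm_sq_to_K]
    · linear_combination (l ^ 2 * (p.2 + c) ^ 2) * hs + ((p.2 + c) ^ 2 + b ^ 2) * hl2 + key p.2
    · ring
    · linear_combination hs
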